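/- Let F_q be a finite field of characteristic p, let n be an odd prime different from p, and let k* be the integer nearest to n/4 (that is, k* = k if n = 4k + 1 and k* = k + 1 if n = 4k + 3). Then the polynomial F(X) = Σ_{i ∈ NR(n)} X^i, where NR(n) ⊆ {1, …, n−1} is the set of quadratic nonresidues modulo n, has unit image in F_q[X]/(Q_n) if and only if p does not divide k*. -/

import Mathlib

open Polynomial
open scoped Classical

lemma aux_not_isSquare_ne_zero {n : ℕ} {a : ZMod n} (h : ¬ IsSquare a) : a ≠ 0 := by
  rintro rfl; exact h ⟨0, (mul_zero 0).symm⟩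

lemma aux_isSquare_mul {n : ℕ} [Fact n.Prime] {a b : ZMod n} (ha : a ≠ 0) (hb : b ≠ 0) :
    IsSquare (a * b) ↔ (IsSquare a ↔ IsSquare b) := by
  have hab : a * b ≠ 0 := mul_ne_zero ha hb
  rw [← quadraticChar_one_iff_isSquare ha, ← quadraticChar_one_iff_isSquare hb,
    ← quadraticChar_one_iff_isSquare hab, map_mul]
  rcases quadraticChar_dichotomy ha with h | h <;>
    rcases quadraticChar_dichotomy hb with h' | h' <;>
      rw [h, h'] <;> norm_num

set_option maxHeartbeats 2000000 in
/-- For an odd prime `n ≠ p`, the quadratic-nonresidue indicator polynomial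
`∑_{i ∈ NR(n)} X^i` has unit image in `F_q[X]/(Q_n)` if and only if `p` does not divide
the integer `k*` nearest to `n/4`. -/
theorem stmt8 {F : Type*} [Field F] [Fintype F] (p n k : ℕ) [Fact p.Prime] [CharP F p]
    (hn : n.Prime) (hn2 : n ≠ 2) (hnp : n ≠ p)
    (hk : (n % 4 = 1 ∧ k = n / 4) ∨ (n % 4 = 3 ∧ k = n / 4 + 1)) :
    IsUnit (Ideal.Quotient.mk
      (Ideal.span {(∑ i ∈ Finset.range n, X ^ i : F[X])})
      (∑ i ∈ (Finset.Ico 1 n).filter (fun i : ℕ => ¬ IsSquare ((i : ZMod n))), X ^ i)) ↔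
    ¬ p ∣ k := by
  set q : F[X] := ∑ i ∈ Finset.range n, X ^ i with hq
  set I : Ideal F[X] := Ideal.span {q} with hI
  set Fp : F[X] := ∑ i ∈ (Finset.Ico 1 n).filter (fun i : ℕ => ¬ IsSquare ((i : ZMod n))), X ^ i
    with hFp
  set mk : F[X] →+* F[X] ⧸ I := Ideal.Quotient.mk I with hmk
  set x : F[X] ⧸ I := mk X with hx
  haveI : Fact n.Prime := ⟨hn⟩
  haveI : NeZero n := ⟨hn.ne_zero⟩
  have hnn2 : 2 ≤ n := hn.two_le
  have hn3 : 3 ≤ n := by rcases hk with ⟨h1, _⟩ | ⟨h1, _⟩ <;> omega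
  have hq0 : mk q = 0 := Ideal.Quotient.eq_zero_iff_mem.2 (Ideal.subset_span rfl)
  have hxn : x ^ n = 1 := by
    have h1 : q * (X - 1) = X ^ n - 1 := geom_sum_mul X n
    have h2 : mk (q * (X - 1)) = 0 := by rw [map_mul, hq0, zero_mul]
    rw [h1] at h2
    have := sub_eq_zero.1 (by simpa using h2)
    simpa using this
  -- the "character" ψ
  set ψ : ZMod n → F[X] ⧸ I := fun t => x ^ t.val with hψdef
  have hψ0 : ψ 0 = 1 := by simp [hψdef, ZMod.val_zero]
  have hψadd : ∀ s t : ZMod n, ψ (s + t) = ψ s * ψ t := by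
    intro s t
    show x ^ (s + t).val = x ^ s.val * x ^ t.val
    rw [← pow_add]
    have hv : (s + t).val = (s.val + t.val) % n := ZMod.val_add s t
    conv_rhs => rw [← Nat.div_add_mod (s.val + t.val) n]
    rw [hv, pow_add, pow_mul, hxn, one_pow, one_mul]
  -- the residue/nonresidue sets
  set NR : Finset (ZMod n) := Finset.univ.filter (fun t => ¬ IsSquare t) with hNR
  set QR : Finset (ZMod n) := Finset.univ.filter (fun t => t ≠ 0 ∧ IsSquare t) with hQR
  have hmemNR : ∀ t : ZMod n, t ∈ NR ↔ ¬ IsSquare t := by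
    intro t; simp [hNR]
  have hmemQR : ∀ t : ZMod n, t ∈ QR ↔ (t ≠ 0 ∧ IsSquare t) := by
    intro t; simp [hQR]
  -- the image of Fp is the sum over NR
  have hu : mk Fp = ∑ t ∈ NR, ψ t := by
    rw [hFp, map_sum]
    refine Finset.sum_bij (fun i _ => (i : ZMod n)) ?_ ?_ ?_ ?_
    · intro i hi
      simp only [Finset.mem_filter, Finset.mem_Ico] at hi
      exact (hmemNR _).2 hi.2
    · intro i hi j hj hij
      simp only [Finset.mem_filter, Finset.mem_Ico] at hi hj
      have h2 := (ZMod.natCast_eq_natCast_iff' i j n).1 hij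
      rw [Nat.mod_eq_of_lt hi.1.2, Nat.mod_eq_of_lt hj.1.2] at h2
      exact h2
    · intro t ht
      have ht' := (hmemNR _).1 ht
      have h0 : t ≠ 0 := aux_not_isSquare_ne_zero ht'
      have hval0 : t.val ≠ 0 := fun h => h0 ((ZMod.val_eq_zero t).1 h)
      have hcast : ((t.val : ZMod n)) = t := by
        simp [ZMod.natCast_val, ZMod.cast_id]
      refine ⟨t.val, ?_, hcast⟩
      simp only [Finset.mem_filter, Finset.mem_Ico]
      refine ⟨⟨by omega, t.val_lt⟩, by rw [hcast]; exact ht'⟩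
    · intro i hi
      simp only [Finset.mem_filter, Finset.mem_Ico] at hi
      have hcast : ((i : ZMod n)).val = i := by
        rw [ZMod.val_natCast, Nat.mod_eq_of_lt hi.1.2]
      show mk (X ^ i) = x ^ ((i : ZMod n)).val
      rw [hcast, map_pow]
  -- partition: 1 + S QR + S NR = 0
  have hfull : ∑ t : ZMod n, ψ t = 0 := by
    have h1 : ∑ t : ZMod n, ψ t = mk q := by
      rw [hq, map_sum]
      refine Finset.sum_bij (fun (t : ZMod n) _ => t.val) ?_ ?_ ?_ ?_
      · intro t _; exact Finset.mem_range.2 t.val_lt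
      · intro s _ t _ h; exact ZMod.val_injective n h
      · intro i hi
        refine ⟨(i : ZMod n), Finset.mem_univ _, ?_⟩
        show ((i : ZMod n)).val = i
        rw [ZMod.val_natCast, Nat.mod_eq_of_lt (Finset.mem_range.1 hi)]
      · intro t _
        show ψ t = mk (X ^ t.val)
        rw [map_pow, ← hx]
    rw [h1, hq0]
  have hQRinsert : Finset.univ.filter (fun t : ZMod n => IsSquare t) = insert 0 QR := by
    ext t
    by_cases h0 : t = 0
    · subst h0
      simp [hmemQR]
    · simp only [Finset.mem_filter, Finset.mem_univ, true_and, Finset.mem_insert, hmemQR, h0,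
        false_or, ne_eq, not_false_eq_true]
  have h0notQR : (0 : ZMod n) ∉ QR := by simp [hmemQR]
  set SNR : F[X] ⧸ I := ∑ t ∈ NR, ψ t with hSNR
  set SQR : F[X] ⧸ I := ∑ t ∈ QR, ψ t with hSQR
  have hpart : 1 + SQR + SNR = 0 := by
    have hsplit := Finset.sum_filter_add_sum_filter_not Finset.univ
      (fun t : ZMod n => IsSquare t) ψ
    rw [hQRinsert, Finset.sum_insert h0notQR, hψ0, ← hNR, ← hSNR, ← hSQR, hfull] at hsplit
    linear_combination hsplit
  have hSS : SNR + SQR = -1 := by linear_combination hpart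
  -- image of NR under multiplication
  have himg : ∀ s : ZMod n, s ≠ 0 →
      NR.image (· * s) = if IsSquare s then NR else QR := by
    intro s hs
    ext b
    simp only [Finset.mem_image]
    constructor
    · rintro ⟨a, ha, rfl⟩
      have ha' := (hmemNR _).1 ha
      have ha0 : a ≠ 0 := aux_not_isSquare_ne_zero ha'
      have hmul := aux_isSquare_mul ha0 hs
      by_cases hsq : IsSquare s
      · rw [if_pos hsq, hmemNR]
        intro h
        exact ha' ((hmul.1 h).2 hsq)
      · rw [if_neg hsq, hmemQR]
        exact ⟨mul_ne_zero ha0 hs, hmul.2 ⟨fun h => absurd h ha', fun h => absurd h hsq⟩⟩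
    · intro hb
      have hsinv : s⁻¹ ≠ 0 := inv_ne_zero hs
      refine ⟨b * s⁻¹, ?_, by field_simp⟩
      by_cases hsq : IsSquare s
      · rw [if_pos hsq] at hb
        have hb' := (hmemNR _).1 hb
        have hb0 : b ≠ 0 := aux_not_isSquare_ne_zero hb'
        rw [hmemNR]
        intro h
        exact hb' (((aux_isSquare_mul hb0 hsinv).1 h).2 (isSquare_inv.2 hsq))
      · rw [if_neg hsq] at hb
        obtain ⟨hb0, hbsq⟩ := (hmemQR _).1 hb
        rw [hmemNR]
        intro h
        exact hsq (isSquare_inv.1 (((aux_isSquare_mul hb0 hsinv).1 h).1 hbsq))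
  -- the sum T s = ∑_{a ∈ NR} ψ (a * s)
  have hT : ∀ s : ZMod n, (∑ a ∈ NR, ψ (a * s)) =
      if s = 0 then (NR.card : F[X] ⧸ I)
      else if IsSquare s then SNR else SQR := by
    intro s
    by_cases hs : s = 0
    · subst hs
      simp [hψ0]
    · rw [if_neg hs]
      have himage : ∑ b ∈ NR.image (· * s), ψ b = ∑ a ∈ NR, ψ (a * s) :=
        Finset.sum_image (fun a _ b _ h => mul_right_cancel₀ hs h)
      rw [← himage, himg s hs]
      by_cases hsq : IsSquare s
      · rw [if_pos hsq, if_pos hsq, hSNR]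
      · rw [if_neg hsq, if_neg hsq, hSQR]
  -- main product formula
  have hprod : SNR * SQR = ∑ c ∈ NR, ∑ a ∈ NR, ψ ((1 + c) * a) := by
    rw [hSNR, hSQR, Finset.sum_mul_sum]
    have hinner : ∀ a ∈ NR, (∑ b ∈ QR, ψ a * ψ b) = ∑ c ∈ NR, ψ ((1 + c) * a) := by
      intro a ha
      have ha' := (hmemNR _).1 ha
      have ha0 : a ≠ 0 := aux_not_isSquare_ne_zero ha'
      have himga : NR.image (· * a) = QR := by rw [himg a ha0, if_neg ha']
      have h1 : ∑ b ∈ NR.image (· * a), ψ a * ψ b = ∑ c ∈ NR, ψ a * ψ (c * a) :=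
        Finset.sum_image (fun u _ v _ h => mul_right_cancel₀ ha0 h)
      rw [← himga, h1]
      refine Finset.sum_congr rfl fun c _ => ?_
      rw [← hψadd]
      congr 1
      ring
    rw [Finset.sum_congr rfl hinner, Finset.sum_comm]
  -- partition of NR according to 1 + c
  set P0 : Finset (ZMod n) := NR.filter (fun c => 1 + c = 0) with hP0
  set Ps : Finset (ZMod n) := NR.filter (fun c => 1 + c ≠ 0 ∧ IsSquare (1 + c)) with hPs
  set Pn : Finset (ZMod n) := NR.filter (fun c => ¬ IsSquare (1 + c)) with hPn
  have hdisj : Disjoint P0 Ps := by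
    rw [Finset.disjoint_left]
    intro c hc hc'
    exact ((Finset.mem_filter.1 hc').2).1 ((Finset.mem_filter.1 hc).2)
  have hunion : NR.filter (fun c => IsSquare (1 + c)) = P0 ∪ Ps := by
    ext c
    simp only [Finset.mem_filter, Finset.mem_union, hP0, hPs]
    constructor
    · rintro ⟨hc, hsq⟩
      by_cases h0 : 1 + c = 0
      · exact Or.inl ⟨hc, h0⟩
      · exact Or.inr ⟨hc, h0, hsq⟩
    · rintro (⟨hc, h0⟩ | ⟨hc, _, hsq⟩)
      · exact ⟨hc, by rw [h0]; exact IsSquare.zero⟩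
      · exact ⟨hc, hsq⟩
  have hPnmem : NR.filter (fun c => ¬ IsSquare (1 + c)) = Pn := rfl
  -- sum splitting
  have hsplitsum : SNR * SQR
      = (P0.card : F[X] ⧸ I) * (NR.card : F[X] ⧸ I)
        + (Ps.card : F[X] ⧸ I) * SNR + (Pn.card : F[X] ⧸ I) * SQR := by
    have hTT : ∀ c : ZMod n, (∑ a ∈ NR, ψ ((1 + c) * a)) =
        if 1 + c = 0 then (NR.card : F[X] ⧸ I)
        else if IsSquare (1 + c) then SNR else SQR := by
      intro c
      calc (∑ a ∈ NR, ψ ((1 + c) * a)) = ∑ a ∈ NR, ψ (a * (1 + c)) :=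
            Finset.sum_congr rfl fun a _ => by rw [mul_comm]
        _ = _ := hT (1 + c)
    rw [hprod, Finset.sum_congr rfl fun c _ => hTT c,
      ← Finset.sum_filter_add_sum_filter_not NR (fun c => IsSquare (1 + c)), hunion,
      Finset.sum_union hdisj, hPnmem]
    have e0 : ∀ c ∈ P0, (if 1 + c = 0 then (NR.card : F[X] ⧸ I)
        else if IsSquare (1 + c) then SNR else SQR) = (NR.card : F[X] ⧸ I) := by
      intro c hc
      rw [if_pos (Finset.mem_filter.1 hc).2]
    have es : ∀ c ∈ Ps, (if 1 + c = 0 then (NR.card : F[X] ⧸ I)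
        else if IsSquare (1 + c) then SNR else SQR) = SNR := by
      intro c hc
      obtain ⟨h0, hsq⟩ := (Finset.mem_filter.1 hc).2
      rw [if_neg h0, if_pos hsq]
    have en : ∀ c ∈ Pn, (if 1 + c = 0 then (NR.card : F[X] ⧸ I)
        else if IsSquare (1 + c) then SNR else SQR) = SQR := by
      intro c hc
      have hnsq := (Finset.mem_filter.1 hc).2
      rw [if_neg (fun h => hnsq (by rw [h]; exact IsSquare.zero)), if_neg hnsq]
    rw [Finset.sum_congr rfl e0, Finset.sum_congr rfl es, Finset.sum_congr rfl en,
      Finset.sum_const, Finset.sum_const, Finset.sum_const, nsmul_eq_mul, nsmul_eq_mul,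
      nsmul_eq_mul]
  -- cardinalities
  have hPcard : P0.card + Ps.card + Pn.card = NR.card := by
    have h1 := Finset.card_filter_add_card_filter_not
      (s := NR) (p := fun c => IsSquare (1 + c))
    rw [hunion, Finset.card_union_of_disjoint hdisj, hPnmem] at h1
    exact h1
  have hPnPs : Pn.card = Ps.card := by
    refine Finset.card_bij' (fun c _ => c⁻¹) (fun c _ => c⁻¹) ?_ ?_ ?_ ?_
    · intro c hc
      obtain ⟨hcNR, hnsq⟩ := Finset.mem_filter.1 hc
      have hc' := (hmemNR _).1 hcNR
      have hc0 : c ≠ 0 := aux_not_isSquare_ne_zero hc'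
      have h1c : (1 : ZMod n) + c ≠ 0 := fun h => hnsq (h ▸ IsSquare.zero)
      have hinv0 : c⁻¹ ≠ 0 := inv_ne_zero hc0
      have heq : 1 + c⁻¹ = (1 + c) * c⁻¹ := by
        rw [add_mul, one_mul, mul_inv_cancel₀ hc0, add_comm]
      rw [hPs, Finset.mem_filter]
      refine ⟨(hmemNR _).2 (fun h => hc' (isSquare_inv.1 h)), ?_, ?_⟩
      · rw [heq]; exact mul_ne_zero h1c hinv0
      · rw [heq]
        exact (aux_isSquare_mul h1c hinv0).2
          ⟨fun h => absurd h hnsq, fun h => absurd (isSquare_inv.1 h) hc'⟩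
    · intro c hc
      obtain ⟨hcNR, h1c, hsq⟩ := Finset.mem_filter.1 hc
      have hc' := (hmemNR _).1 hcNR
      have hc0 : c ≠ 0 := aux_not_isSquare_ne_zero hc'
      have hinv0 : c⁻¹ ≠ 0 := inv_ne_zero hc0
      have heq : 1 + c⁻¹ = (1 + c) * c⁻¹ := by
        rw [add_mul, one_mul, mul_inv_cancel₀ hc0, add_comm]
      rw [hPn, Finset.mem_filter]
      refine ⟨(hmemNR _).2 (fun h => hc' (isSquare_inv.1 h)), ?_⟩
      rw [heq]
      intro h
      exact hc' (isSquare_inv.1 (((aux_isSquare_mul h1c hinv0).1 h).1 hsq))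
    · intro c hc
      have hc0 : c ≠ 0 := aux_not_isSquare_ne_zero ((hmemNR _).1 (Finset.mem_filter.1 hc).1)
      exact inv_inv c
    · intro c hc
      have hc0 : c ≠ 0 := aux_not_isSquare_ne_zero ((hmemNR _).1 (Finset.mem_filter.1 hc).1)
      exact inv_inv c
  have hcardQRNR : QR.card = NR.card := by
    obtain ⟨g, hg⟩ := FiniteField.exists_nonsquare (F := ZMod n)
      (by rw [ZMod.ringChar_zmod_n]; exact hn2)
    have hg0 : g ≠ 0 := aux_not_isSquare_ne_zero hg
    have h1 : NR.image (· * g) = QR := by rw [himg g hg0, if_neg hg]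
    rw [← h1, Finset.card_image_of_injective NR (mul_left_injective₀ hg0)]
  have hNn : 2 * NR.card + 1 = n := by
    have h1 := Finset.card_filter_add_card_filter_not
      (s := (Finset.univ : Finset (ZMod n))) (p := fun t => IsSquare t)
    rw [hQRinsert, Finset.card_insert_of_notMem h0notQR, Finset.card_univ, ZMod.card] at h1
    have h2 : Finset.univ.filter (fun t : ZMod n => ¬ IsSquare t) = NR := rfl
    rw [h2, hcardQRNR] at h1
    omega
  -- the key identity
  have hprodval : mk Fp * (mk Fp + 1) = -(SNR * SQR) := by
    rw [hu]
    linear_combination SNR * hpart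
  have hkey : mk Fp * (mk Fp + 1) = (k : F[X] ⧸ I) ∨
      mk Fp * (mk Fp + 1) = -(k : F[X] ⧸ I) := by
    rcases hk with ⟨h4, hk4⟩ | ⟨h4, hk4⟩
    · -- n % 4 = 1
      have hP0card : P0.card = 0 := by
        rw [Finset.card_eq_zero, Finset.eq_empty_iff_forall_notMem]
        intro c hc
        obtain ⟨hcNR, h0⟩ := Finset.mem_filter.1 hc
        have hc' := (hmemNR _).1 hcNR
        have hcm1 : c = -1 := by linear_combination h0
        have hsqm1 : IsSquare (-1 : ZMod n) := ZMod.exists_sq_eq_neg_one_iff.2 (by omega)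
        exact hc' (by rw [hcm1]; exact hsqm1)
      have he : Ps.card = k ∧ Pn.card = k := by
        have := hPnPs; have := hPcard; have := hNn
        omega
      refine Or.inl ?_
      rw [hprodval, hsplitsum, hP0card, he.1, he.2]
      push_cast
      linear_combination (-(k : F[X] ⧸ I)) * hSS
    · -- n % 4 = 3
      have hsqm1 : ¬ IsSquare (-1 : ZMod n) := by
        rw [ZMod.exists_sq_eq_neg_one_iff]
        omega
      have hP0card : P0.card = 1 := by
        have : P0 = {-1} := by
          ext c
          rw [hP0, Finset.mem_filter, Finset.mem_singleton, hmemNR]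
          constructor
          · rintro ⟨_, h0⟩
            linear_combination h0
          · rintro rfl
            exact ⟨hsqm1, by ring⟩
        rw [this, Finset.card_singleton]
      have he : Ps.card = k - 1 ∧ Pn.card = k - 1 ∧ k = Ps.card + 1 := by
        have := hPnPs; have := hPcard; have := hNn
        omega
      refine Or.inr ?_
      rw [hprodval, hsplitsum, hP0card, hPnPs, he.2.2]
      have hm : NR.card = 2 * Ps.card + 1 := by
        have := hPcard; have := hNn; have := hPnPs
        omega
      rw [hm]
      push_cast
      linear_combination (-(Ps.card : F[X] ⧸ I)) * hSS
  -- mk Fp + 1 ≠ 0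
  have hqc : ∀ j, q.coeff j = if j ∈ Finset.range n then 1 else 0 := by
    intro j
    rw [hq, Polynomial.finset_sum_coeff]
    simp only [Polynomial.coeff_X_pow]
    rw [Finset.sum_ite_eq (Finset.range n) j (fun _ => (1 : F))]
  have hne : mk Fp + 1 ≠ 0 := by
    intro h0
    have hmem : Fp + 1 ∈ I := Ideal.Quotient.eq_zero_iff_mem.1 (by rw [map_add, map_one]; exact h0)
    rw [hI, Ideal.mem_span_singleton] at hmem
    obtain ⟨d, hd⟩ := hmem
    have hF0 : Fp.coeff 0 = 0 := by
      rw [hFp, Polynomial.finset_sum_coeff]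
      refine Finset.sum_eq_zero fun i hi => ?_
      simp only [Finset.mem_filter, Finset.mem_Ico] at hi
      rw [Polynomial.coeff_X_pow, if_neg (by omega)]
    have hF1 : Fp.coeff 1 = 0 := by
      rw [hFp, Polynomial.finset_sum_coeff]
      refine Finset.sum_eq_zero fun i hi => ?_
      simp only [Finset.mem_filter, Finset.mem_Ico] at hi
      rw [Polynomial.coeff_X_pow]
      by_cases h1 : (1 : ℕ) = i
      · exfalso
        apply hi.2
        rw [← h1, Nat.cast_one]
        exact IsSquare.one
      · rw [if_neg h1]
    have hq00 : q.coeff 0 = 1 := by rw [hqc 0, if_pos (Finset.mem_range.2 (by omega))]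
    have hq1 : q.coeff 1 = 1 := by rw [hqc 1, if_pos (Finset.mem_range.2 (by omega))]
    have hqne : q ≠ 0 := fun h => by simp [h] at hq00
    have hFne : Fp + 1 ≠ 0 := fun h => by
      have := congrArg (fun r => Polynomial.coeff r 0) h
      simp [hF0] at this
    have hdne : d ≠ 0 := by
      rintro rfl
      rw [mul_zero] at hd
      exact hFne hd
    have hdegq : q.natDegree = n - 1 := by
      have hle : q.natDegree ≤ n - 1 := by
        rw [hq]
        refine Polynomial.natDegree_sum_le_of_forall_le _ _ fun i hi => ?_
        rw [Polynomial.natDegree_X_pow]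
        have := Finset.mem_range.1 hi
        omega
      have hge : n - 1 ≤ q.natDegree := by
        refine Polynomial.le_natDegree_of_ne_zero ?_
        rw [hqc (n - 1), if_pos (Finset.mem_range.2 (by omega))]
        exact one_ne_zero
      omega
    have hdegF : (Fp + 1).natDegree ≤ n - 1 := by
      refine le_trans (Polynomial.natDegree_add_le _ _) ?_
      rw [Polynomial.natDegree_one]
      simp only [max_le_iff]
      refine ⟨?_, by omega⟩
      rw [hFp]
      refine Polynomial.natDegree_sum_le_of_forall_le _ _ fun i hi => ?_
      simp only [Finset.mem_filter, Finset.mem_Ico] at hi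
      rw [Polynomial.natDegree_X_pow]
      omega
    have hdeg : d.natDegree = 0 := by
      have := Polynomial.natDegree_mul hqne hdne
      rw [← hd] at this
      omega
    obtain ⟨a, ha⟩ : ∃ a : F, d = Polynomial.C a :=
      ⟨d.coeff 0, Polynomial.eq_C_of_natDegree_eq_zero hdeg⟩
    rw [ha] at hd
    have hc0 : (Fp + 1).coeff 0 = q.coeff 0 * a := by rw [hd, Polynomial.coeff_mul_C]
    have hc1 : (Fp + 1).coeff 1 = q.coeff 1 * a := by rw [hd, Polynomial.coeff_mul_C]
    have ha1 : a = 1 := by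
      rw [Polynomial.coeff_add, hF0, hq00, zero_add, Polynomial.coeff_one_zero, one_mul] at hc0
      exact hc0.symm
    have ha0 : a = 0 := by
      rw [Polynomial.coeff_add, hF1, hq1, zero_add, Polynomial.coeff_one, one_mul] at hc1
      simpa using hc1.symm
    rw [ha1] at ha0
    exact one_ne_zero ha0
  -- conclusion
  constructor
  · intro hunit hdvd
    have hunit' : IsUnit (mk Fp) := hunit
    have hkF : (k : F) = 0 := (CharP.cast_eq_zero_iff F p k).2 hdvd
    have hkR : (k : F[X] ⧸ I) = 0 := by
      have h1 : (algebraMap F (F[X] ⧸ I)) ((k : F)) = (k : F[X] ⧸ I) := map_natCast _ k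
      rw [← h1, hkF, map_zero]
    have hzero : mk Fp * (mk Fp + 1) = 0 := by
      rcases hkey with h | h
      · rw [h, hkR]
      · rw [h, hkR, neg_zero]
    exact hne ((hunit'.mul_right_eq_zero).1 hzero)
  · intro hndvd
    have hkF : (k : F) ≠ 0 := fun h => hndvd ((CharP.cast_eq_zero_iff F p k).1 h)
    have hkR : IsUnit (k : F[X] ⧸ I) := by
      have h1 : (algebraMap F (F[X] ⧸ I)) ((k : F)) = (k : F[X] ⧸ I) := by
        rw [map_natCast]
      rw [← h1]
      exact (isUnit_iff_ne_zero.2 hkF).map (algebraMap F (F[X] ⧸ I))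
    show IsUnit (mk Fp)
    rcases hkey with h | h
    · have h2 : IsUnit (mk Fp * (mk Fp + 1)) := by rw [h]; exact hkR
      exact isUnit_of_mul_isUnit_left h2
    · have h2 : IsUnit (mk Fp * (mk Fp + 1)) := by rw [h]; exact hkR.neg
      exact isUnit_of_mul_isUnit_left h2
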